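/- Let E = ½(n⊗k₂ + k₂⊗n) with n = (1,1,1)/√3 and k₂ = (-1,-1,2)/√6. For the cubic third-order energy form c_{abcdef}E_{ab}E_{cd}E_{ef} = c₁₁₁(I₁³ - 3I₁I₂ + 3I₄) + 3c₁₁₂(I₁I₂ - 3I₄) + 12c₁₄₄(I₁I₃ - I₆) + 6c₁₂₃I₄ + 48c₄₅₆I₅ + 12c₁₆₆I₆, where I₁ = tr E, I₂ = E₁₁E₂₂ + E₂₂E₃₃ + E₃₃E₁₁, I₃ = E₁₂² + E₂₃² + E₃₁², I₄ = E₁₁E₂₂E₃₃, I₅ = E₁₂E₂₃E₃₁, I₆ = (E₁₁+E₂₂)E₁₂² + (E₂₂+E₃₃)E₂₃² + (E₃₃+E₁₁)E₃₁², the value equals (1/(9√2))[c₁₁₁ + 2c₁₂₃ - 2c₄₅₆ - 3(c₁₁₂ - c₁₄₄ + c₁₆₆)]. -/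

import Mathlib

noncomputable section

/-- The propagation direction n = (1,1,1)/√3. -/
def nvec : Fin 3 → ℝ := fun _ => 1 / Real.sqrt 3

/-- The transverse direction k₂ = (-1,-1,2)/√6. -/
def kvec : Fin 3 → ℝ := ![-1 / Real.sqrt 6, -1 / Real.sqrt 6, 2 / Real.sqrt 6]

/-- The strain E = ½(n⊗k₂ + k₂⊗n). -/
def E : Matrix (Fin 3) (Fin 3) ℝ :=
  Matrix.of fun a b => (1/2) * (nvec a * kvec b + kvec a * nvec b)


lemma h36 : Real.sqrt 3 * Real.sqrt 6 = 3 * Real.sqrt 2 := by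
  rw [← Real.sqrt_mul (by norm_num)]
  rw [show (3:ℝ)*6 = 3^2*2 by norm_num, Real.sqrt_mul (by positivity), Real.sqrt_sq (by norm_num)]

lemma h63 : Real.sqrt 6 * Real.sqrt 3 = 3 * Real.sqrt 2 := by
  rw [mul_comm]; exact h36

lemma hE (a b : Fin 3) : E a b = (![(-1:ℝ),-1,2] a + ![(-1:ℝ),-1,2] b) * Real.sqrt 2 / 12 := by
  have h3 : Real.sqrt 3 ≠ 0 := by positivity
  have h6 : Real.sqrt 6 ≠ 0 := by positivity
  have hsq : Real.sqrt 2 ^ 2 = 2 := Real.sq_sqrt (by norm_num)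
  fin_cases a <;> fin_cases b <;>
    simp [E, nvec, kvec] <;> field_simp <;>
    first
      | linear_combination (-2*Real.sqrt 2) * h36 + (-6) * hsq
      | linear_combination (36*Real.sqrt 2) * hsq
      | linear_combination (-18*Real.sqrt 2) * hsq
      | linear_combination (-72*Real.sqrt 2) * hsq

def I1 : ℝ := E 0 0 + E 1 1 + E 2 2
def I2 : ℝ := E 0 0 * E 1 1 + E 1 1 * E 2 2 + E 2 2 * E 0 0
def I3 : ℝ := (E 0 1)^2 + (E 1 2)^2 + (E 2 0)^2
def I4 : ℝ := E 0 0 * E 1 1 * E 2 2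
def I5 : ℝ := E 0 1 * E 1 2 * E 2 0
def I6 : ℝ := (E 0 0 + E 1 1) * (E 0 1)^2 + (E 1 1 + E 2 2) * (E 1 2)^2
  + (E 2 2 + E 0 0) * (E 2 0)^2

/-- for E = ½(n⊗k₂ + k₂⊗n) with n = (1,1,1)/√3 and
k₂ = (-1,-1,2)/√6, the cubic third-order energy form
c_{abcdef}E_{ab}E_{cd}E_{ef} evaluates to
(1/(9√2))[c₁₁₁ + 2c₁₂₃ - 2c₄₅₆ - 3(c₁₁₂ - c₁₄₄ + c₁₆₆)]. -/
theorem stmt19 (c111 c112 c144 c123 c456 c166 : ℝ) :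
    c111 * (I1^3 - 3*I1*I2 + 3*I4) + 3*c112 * (I1*I2 - 3*I4)
      + 12*c144 * (I1*I3 - I6) + 6*c123 * I4 + 48*c456 * I5 + 12*c166 * I6
    = (1/(9 * Real.sqrt 2))
        * (c111 + 2*c123 - 2*c456 - 3*(c112 - c144 + c166)) := by
  have hsq : Real.sqrt 2 ^ 2 = 2 := Real.sq_sqrt (by norm_num)
  have hinv : (1:ℝ)/(9*Real.sqrt 2) = Real.sqrt 2/18 := by
    rw [div_eq_div_iff (by positivity) (by norm_num : (18:ℝ) ≠ 0)]
    linear_combination (-9) * hsq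
  rw [hinv]
  simp only [I1, I2, I3, I4, I5, I6, hE]
  norm_num [Matrix.cons_val_zero, Matrix.cons_val_one, Matrix.cons_val_two, Matrix.head_cons]
  linear_combination ((c111 + 2*c123 - 2*c456 - 3*(c112 - c144 + c166))
    * Real.sqrt 2 / 36) * hsq
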